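/- arXiv:2604.13033 — 2 statements merged into one kernel-verified Lean document; each statement's English description precedes it below -/
import Mathlib

section
/- For the Shannon entropy H(p) = ∑ η(p_i) with η(x) = −x ln x, and p a probability distribution in non-increasing order with H(p) < ∞, for any m ≥ 1: sup{ H(p) − H(q) : q m-partially majorized by p } ≤ Ŝ(p^{[m]}), where p^{[m]} = (p_{m+1}, p_{m+2}, ...) is the tail of p and Ŝ(r) := ∑_i η(r_i) − η(∑_i r_i) for a nonzero summable nonnegative sequence r. -/
open scoped BigOperators

/-- Sum of the `k` largest entries of a nonnegative summable sequence,
defined as the supremum of sums over `k`-element index sets. -/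
noncomputable def topSum (p : ℕ → ℝ) (k : ℕ) : ℝ :=
  sSup {s : ℝ | ∃ t : Finset ℕ, t.card = k ∧ s = ∑ i ∈ t, p i}

/-- `p` is a probability distribution on ℕ. -/
def IsDistrib (p : ℕ → ℝ) : Prop :=
  (∀ i, 0 ≤ p i) ∧ Summable p ∧ ∑' i, p i = 1

/-- `p` m-partially majorizes `q`. -/
def PMaj (m : ℕ) (p q : ℕ → ℝ) : Prop :=
  ∀ k ≤ m, topSum q k ≤ topSum p k

/-- `p` majorizes `q`. -/
def Maj (p q : ℕ → ℝ) : Prop :=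
  ∀ k, topSum q k ≤ topSum p k

open MeasureTheory Real



lemma fin_le_strictMono {k : ℕ} (f : Fin k → ℕ) (hf : StrictMono f) :
    ∀ j : Fin k, (j : ℕ) ≤ f j := by
  intro j
  obtain ⟨n, hn⟩ := j
  induction n with
  | zero => exact Nat.zero_le _
  | succ n ih =>
      have h1 : (⟨n, (Nat.lt_succ_self n).trans hn⟩ : Fin k) < ⟨n + 1, hn⟩ := by
        simp [Fin.lt_def]
      have h2 := hf h1
      have h3 := ih ((Nat.lt_succ_self n).trans hn)
      simp only [Fin.val_mk] at h2 h3 ⊢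
      omega

lemma sum_finset_le_sum_range {p : ℕ → ℝ} (hp : ∀ i, 0 ≤ p i) (hmono : Antitone p)
    (t : Finset ℕ) : ∑ i ∈ t, p i ≤ ∑ j ∈ Finset.range t.card, p j := by
  classical
  set k := t.card with hk
  have he : ∑ i ∈ t, p i = ∑ j : Fin k, p (t.orderEmbOfFin hk.symm j) := by
    rw [← Finset.sum_attach t p]
    exact (Equiv.sum_comp (t.orderIsoOfFin hk.symm).toEquiv (fun x => p x.1)).symm
  rw [he, Finset.sum_range fun j => p j]
  apply Finset.sum_le_sum
  intro j _
  exact hmono (fin_le_strictMono _ (t.orderEmbOfFin hk.symm).strictMono j)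


lemma lintegral_min_div (x : ℝ) (hx0 : 0 ≤ x) (hx1 : x ≤ 1) :
    ∫⁻ t in Set.Ioc (0:ℝ) 1, ENNReal.ofReal (min x t / t)
      = ENNReal.ofReal (x + Real.negMulLog x) := by
  rcases eq_or_lt_of_le hx0 with h0 | h0
  · -- x = 0
    rw [← h0]
    have : ∀ t ∈ Set.Ioc (0:ℝ) 1, ENNReal.ofReal (min 0 t / t) = 0 := by
      intro t ht
      rw [min_eq_left (le_of_lt ht.1)]
      simp
    rw [setLIntegral_congr_fun measurableSet_Ioc this]
    simp [Real.negMulLog]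
  · -- 0 < x
    have hsplit : Set.Ioc (0:ℝ) 1 = Set.Ioc 0 x ∪ Set.Ioc x 1 :=
      (Set.Ioc_union_Ioc_eq_Ioc (le_of_lt h0) hx1).symm
    rw [hsplit, lintegral_union measurableSet_Ioc (Set.Ioc_disjoint_Ioc_of_le le_rfl)]
    have h1 : ∫⁻ t in Set.Ioc (0:ℝ) x, ENNReal.ofReal (min x t / t) = ENNReal.ofReal x := by
      have : ∀ t ∈ Set.Ioc (0:ℝ) x, ENNReal.ofReal (min x t / t) = 1 := by
        intro t ht
        rw [min_eq_right ht.2, div_self (ne_of_gt ht.1)]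
        simp
      rw [setLIntegral_congr_fun measurableSet_Ioc this]
      simp [Real.volume_Ioc, hx0]
    have h2 : ∫⁻ t in Set.Ioc x 1, ENNReal.ofReal (min x t / t)
        = ENNReal.ofReal (Real.negMulLog x) := by
      have hcong : ∀ t ∈ Set.Ioc x 1, ENNReal.ofReal (min x t / t) = ENNReal.ofReal (x / t) := by
        intro t ht
        rw [min_eq_left (le_of_lt ht.1)]
      rw [setLIntegral_congr_fun measurableSet_Ioc hcong]
      have hint : IntegrableOn (fun t => x / t) (Set.Ioc x 1) := by
        have hc : ContinuousOn (fun t => x / t) (Set.Icc x 1) := by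
          apply ContinuousOn.div continuousOn_const continuousOn_id
          intro t ht
          exact ne_of_gt (lt_of_lt_of_le h0 ht.1)
        exact (hc.integrableOn_compact' isCompact_Icc measurableSet_Icc).mono_set
          Set.Ioc_subset_Icc_self
      rw [← ofReal_integral_eq_lintegral_ofReal hint]
      · congr 1
        have heq : ∫ t in Set.Ioc x 1, x / t = ∫ t in x..1, x / t :=
          (intervalIntegral.integral_of_le hx1).symm
        rw [heq]
        have : ∫ t in x..1, x / t = x * Real.log (1 / x) := by
          have h01 : (0:ℝ) ∉ Set.uIcc x 1 := by
            rw [Set.uIcc_of_le hx1]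
            intro hmem
            exact absurd hmem.1 (not_le.mpr h0)
          calc ∫ t in x..1, x / t = ∫ t in x..1, x * (1 / t) := by
                congr 1; ext t; ring
            _ = x * ∫ t in x..1, 1 / t := intervalIntegral.integral_const_mul x _
            _ = x * Real.log (1 / x) := by rw [integral_one_div h01]
        rw [this, Real.log_div one_ne_zero (ne_of_gt h0), Real.negMulLog]
        simp
      · apply (ae_restrict_iff' measurableSet_Ioc).mpr
        apply Filter.Eventually.of_forall
        intro t ht
        have := lt_of_lt_of_le h0 (le_of_lt ht.1)
        positivity
    rw [h1, h2, ← ENNReal.ofReal_add hx0 (Real.negMulLog_nonneg hx0 hx1)]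



lemma min_eq_sub_max (a t : ℝ) : min a t = a - max (a - t) 0 := by
  rcases le_total a t with h | h
  · rw [min_eq_left h, max_eq_right (sub_nonpos.2 h), sub_zero]
  · rw [min_eq_right h, max_eq_left (sub_nonneg.2 h)]
    ring

lemma schur_entropy (q r : ℕ → ℝ) (hq0 : ∀ i, 0 ≤ q i) (hqs : Summable q)
    (hq1 : ∑' i, q i = 1) (hHq : Summable fun i => Real.negMulLog (q i))
    (hr0 : ∀ j, 0 ≤ r j) (hr1 : ∀ j, r j ≤ 1) (M : ℕ)
    (hrs : ∑ j ∈ Finset.range M, r j = 1)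
    (hkey : ∀ S : Finset ℕ, ∑ i ∈ S, q i ≤ ∑ j ∈ Finset.range (min S.card M), r j) :
    ∑ j ∈ Finset.range M, Real.negMulLog (r j) ≤ ∑' i, Real.negMulLog (q i) := by
  have hq1' : ∀ i, q i ≤ 1 := by
    intro i
    calc q i ≤ ∑' i, q i := Summable.le_tsum hqs i fun j _ => hq0 j
      _ = 1 := hq1
  have hqe : ∀ i, 0 ≤ Real.negMulLog (q i) := fun i => negMulLog_nonneg (hq0 i) (hq1' i)
  -- pointwise majorization inequality
  have hpoint : ∀ t : ℝ, 0 < t →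
      ∑ j ∈ Finset.range M, min (r j) t ≤ ∑' i, min (q i) t := by
    intro t ht
    -- the set of large q's is finite
    have hfin : {i | ¬ q i < t}.Finite := by
      have h1 : ∀ᶠ i in Filter.cofinite, q i < t :=
        hqs.tendsto_cofinite_zero.eventually (gt_mem_nhds ht)
      exact h1
    set S := hfin.toFinset with hS
    have hmaxsum : Summable fun i => max (q i - t) 0 :=
      Summable.of_nonneg_of_le (fun i => le_max_right _ _)
        (fun i => max_le (by linarith [ht]) (hq0 i)) hqs
    have hminsum : Summable fun i => min (q i) t :=
      Summable.of_nonneg_of_le (fun i => le_min (hq0 i) (le_of_lt ht))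
        (fun i => min_le_left _ _) hqs
    have hsplit : ∑' i, min (q i) t = 1 - ∑' i, max (q i - t) 0 := by
      have : (fun i => min (q i) t) = fun i => q i - max (q i - t) 0 := by
        funext i; exact min_eq_sub_max _ _
      rw [this, Summable.tsum_sub hqs hmaxsum, hq1]
    have htail : ∑' i, max (q i - t) 0 = ∑ i ∈ S, (q i - t) := by
      rw [tsum_eq_sum (s := S) (f := fun i => max (q i - t) 0)]
      · apply Finset.sum_congr rfl
        intro i hi
        rw [hS, Set.Finite.mem_toFinset] at hi
        exact max_eq_left (by simp at hi; linarith [hi])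
      · intro i hi
        rw [hS, Set.Finite.mem_toFinset] at hi
        simp only [Set.mem_setOf_eq, not_not] at hi
        exact max_eq_right (by linarith)
    have hkeyS := hkey S
    have hrb : ∑ j ∈ Finset.range (min S.card M), r j
        ≤ S.card * t + ∑ j ∈ Finset.range M, max (r j - t) 0 := by
      have h1 : ∀ j, r j ≤ t + max (r j - t) 0 := by
        intro j
        have := le_max_left (r j - t) 0
        linarith
      calc ∑ j ∈ Finset.range (min S.card M), r j
          ≤ ∑ j ∈ Finset.range (min S.card M), (t + max (r j - t) 0) :=
            Finset.sum_le_sum fun j _ => h1 j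
        _ = (min S.card M) * t + ∑ j ∈ Finset.range (min S.card M), max (r j - t) 0 := by
            rw [Finset.sum_add_distrib, Finset.sum_const, Finset.card_range, nsmul_eq_mul]
        _ ≤ S.card * t + ∑ j ∈ Finset.range M, max (r j - t) 0 := by
            apply add_le_add
            · apply mul_le_mul_of_nonneg_right _ (le_of_lt ht)
              exact_mod_cast Nat.cast_le.mpr (Nat.min_le_left _ _)
            · apply Finset.sum_le_sum_of_subset_of_nonneg
              · exact Finset.range_subset_range.mpr (Nat.min_le_right _ _)
              · intro j _ _; exact le_max_right _ _
    have hqtail : ∑' i, max (q i - t) 0 ≤ ∑ j ∈ Finset.range M, max (r j - t) 0 := by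
      rw [htail, Finset.sum_sub_distrib, Finset.sum_const, nsmul_eq_mul]
      have := hkeyS.trans hrb
      linarith
    have hrmin : ∑ j ∈ Finset.range M, min (r j) t
        = 1 - ∑ j ∈ Finset.range M, max (r j - t) 0 := by
      have : ∀ j, min (r j) t = r j - max (r j - t) 0 := fun j => min_eq_sub_max _ _
      rw [Finset.sum_congr rfl fun j _ => this j, Finset.sum_sub_distrib, hrs]
    rw [hrmin, hsplit]
    linarith
  have hminsum : ∀ t : ℝ, 0 < t → Summable fun i => min (q i) t := by
    intro t ht
    exact Summable.of_nonneg_of_le (fun i => le_min (hq0 i) (le_of_lt ht))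
      (fun i => min_le_left _ _) hqs
  have hmeas : ∀ x : ℝ, Measurable fun t : ℝ => ENNReal.ofReal (min x t / t) := by
    intro x
    exact ((measurable_const.min measurable_id).div measurable_id).ennreal_ofReal
  have key : ENNReal.ofReal (1 + ∑ j ∈ Finset.range M, Real.negMulLog (r j))
      ≤ ENNReal.ofReal (1 + ∑' i, Real.negMulLog (q i)) := by
    have hre : ∀ j, 0 ≤ Real.negMulLog (r j) := fun j => negMulLog_nonneg (hr0 j) (hr1 j)
    calc ENNReal.ofReal (1 + ∑ j ∈ Finset.range M, Real.negMulLog (r j))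
        = ∑ j ∈ Finset.range M, ENNReal.ofReal (r j + Real.negMulLog (r j)) := by
          rw [← ENNReal.ofReal_sum_of_nonneg fun j _ => add_nonneg (hr0 j) (hre j)]
          rw [Finset.sum_add_distrib, hrs]
      _ = ∑ j ∈ Finset.range M, ∫⁻ t in Set.Ioc (0:ℝ) 1, ENNReal.ofReal (min (r j) t / t) :=
          Finset.sum_congr rfl fun j _ => (lintegral_min_div _ (hr0 j) (hr1 j)).symm
      _ = ∫⁻ t in Set.Ioc (0:ℝ) 1, ∑ j ∈ Finset.range M, ENNReal.ofReal (min (r j) t / t) :=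
          (lintegral_finset_sum _ fun j _ => hmeas (r j)).symm
      _ ≤ ∫⁻ t in Set.Ioc (0:ℝ) 1, ∑' i, ENNReal.ofReal (min (q i) t / t) := by
          apply lintegral_mono_ae
          refine (ae_restrict_iff' measurableSet_Ioc).mpr (Filter.Eventually.of_forall ?_)
          intro t ht
          have ht0 : 0 < t := ht.1
          calc ∑ j ∈ Finset.range M, ENNReal.ofReal (min (r j) t / t)
              = ENNReal.ofReal (∑ j ∈ Finset.range M, min (r j) t / t) :=
                (ENNReal.ofReal_sum_of_nonneg fun j _ => div_nonneg (le_min (hr0 j) ht0.le) ht0.le).symm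
            _ ≤ ENNReal.ofReal (∑' i, min (q i) t / t) := by
                apply ENNReal.ofReal_le_ofReal
                rw [← Finset.sum_div, tsum_div_const]
                exact (div_le_div_iff_of_pos_right ht0).mpr (hpoint t ht0)
            _ = ∑' i, ENNReal.ofReal (min (q i) t / t) :=
                ENNReal.ofReal_tsum_of_nonneg (fun i => div_nonneg (le_min (hq0 i) ht0.le) ht0.le)
                  ((hminsum t ht0).div_const t)
      _ = ∑' i, ∫⁻ t in Set.Ioc (0:ℝ) 1, ENNReal.ofReal (min (q i) t / t) :=
          lintegral_tsum fun i => (hmeas (q i)).aemeasurable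
      _ = ∑' i, ENNReal.ofReal (q i + Real.negMulLog (q i)) :=
          tsum_congr fun i => lintegral_min_div _ (hq0 i) (hq1' i)
      _ = ENNReal.ofReal (∑' i, (q i + Real.negMulLog (q i))) :=
          (ENNReal.ofReal_tsum_of_nonneg (fun i => add_nonneg (hq0 i) (hqe i))
            (hqs.add hHq)).symm
      _ = ENNReal.ofReal (1 + ∑' i, Real.negMulLog (q i)) := by
          rw [Summable.tsum_add hqs hHq, hq1]
  have hq2 : (0:ℝ) ≤ 1 + ∑' i, Real.negMulLog (q i) := by
    have : 0 ≤ ∑' i, Real.negMulLog (q i) := tsum_nonneg hqe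
    linarith
  have := (ENNReal.ofReal_le_ofReal_iff hq2).mp key
  linarith

lemma le_topSum {q : ℕ → ℝ} (hq0 : ∀ i, 0 ≤ q i) (hqs : Summable q)
    (S : Finset ℕ) : ∑ i ∈ S, q i ≤ topSum q S.card := by
  apply le_csSup
  · refine ⟨∑' i, q i, ?_⟩
    rintro s ⟨t, _, rfl⟩
    exact Summable.sum_le_tsum t (fun i _ => hq0 i) hqs
  · exact ⟨S, rfl, rfl⟩

lemma topSum_le_range {p : ℕ → ℝ} (hp0 : ∀ i, 0 ≤ p i) (hmono : Antitone p) (k : ℕ) :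
    topSum p k ≤ ∑ j ∈ Finset.range k, p j := by
  apply Real.sSup_le
  · rintro s ⟨t, ht, rfl⟩
    rw [← ht]
    exact sum_finset_le_sum_range hp0 hmono t
  · exact Finset.sum_nonneg fun j _ => hp0 j

theorem entropy_pmaj_bound (p : ℕ → ℝ) (hmono : Antitone p) (hp : IsDistrib p)
    (hH : Summable fun i => Real.negMulLog (p i)) (m : ℕ) (hm : 1 ≤ m) :
    sSup {x : ℝ | ∃ q, IsDistrib q ∧ (Summable fun i => Real.negMulLog (q i)) ∧
        PMaj m p q ∧
        x = (∑' i, Real.negMulLog (p i)) - ∑' i, Real.negMulLog (q i)}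
      ≤ (∑' i, Real.negMulLog (p (i + m))) - Real.negMulLog (∑' i, p (i + m)) := by
  obtain ⟨hp0, hps, hp1⟩ := hp
  set T := ∑' i, p (i + m) with hT
  have hsplitp : ∑ i ∈ Finset.range m, p i + T = 1 := by
    rw [hT, Summable.sum_add_tsum_nat_add m hps, hp1]
  have hT0 : 0 ≤ T := tsum_nonneg fun i => hp0 _
  have hp_le1 : ∀ i, p i ≤ 1 := by
    intro i
    calc p i ≤ ∑' i, p i := Summable.le_tsum hps i fun j _ => hp0 j
      _ = 1 := hp1
  set r : ℕ → ℝ := fun j => if j < m then p j else if j = m then T else 0 with hr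
  have hr0 : ∀ j, 0 ≤ r j := by
    intro j
    simp only [hr]
    split
    · exact hp0 j
    · split
      · exact hT0
      · exact le_rfl
  have hr1 : ∀ j, r j ≤ 1 := by
    intro j
    simp only [hr]
    split
    · exact hp_le1 j
    · split
      · have : 0 ≤ ∑ i ∈ Finset.range m, p i := Finset.sum_nonneg fun i _ => hp0 i
        linarith
      · exact zero_le_one
  have hrs : ∑ j ∈ Finset.range (m + 1), r j = 1 := by
    rw [Finset.sum_range_succ]
    have h1 : ∑ j ∈ Finset.range m, r j = ∑ j ∈ Finset.range m, p j :=
      Finset.sum_congr rfl fun j hj => by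
        simp only [hr, if_pos (Finset.mem_range.mp hj)]
    have h2 : r m = T := by simp [hr]
    rw [h1, h2, hsplitp]
  have hrH : ∑ j ∈ Finset.range (m + 1), Real.negMulLog (r j)
      = ∑ j ∈ Finset.range m, Real.negMulLog (p j) + Real.negMulLog T := by
    rw [Finset.sum_range_succ]
    congr 1
    · exact Finset.sum_congr rfl fun j hj => by
        simp only [hr, if_pos (Finset.mem_range.mp hj)]
    · simp [hr]
  have hHsplit : ∑ i ∈ Finset.range m, Real.negMulLog (p i) + ∑' i, Real.negMulLog (p (i + m))
      = ∑' i, Real.negMulLog (p i) := Summable.sum_add_tsum_nat_add m hH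
  -- main bound for each element of the set
  have hbound : ∀ x ∈ {x : ℝ | ∃ q, IsDistrib q ∧ (Summable fun i => Real.negMulLog (q i)) ∧
      PMaj m p q ∧
      x = (∑' i, Real.negMulLog (p i)) - ∑' i, Real.negMulLog (q i)},
      x ≤ (∑' i, Real.negMulLog (p (i + m))) - Real.negMulLog T := by
    rintro x ⟨q, ⟨hq0, hqs, hq1⟩, hHq, hmaj, rfl⟩
    have hkey : ∀ S : Finset ℕ, ∑ i ∈ S, q i ≤ ∑ j ∈ Finset.range (min S.card (m + 1)), r j := by
      intro S
      by_cases hk : S.card ≤ m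
      · have h1 : min S.card (m + 1) = S.card := Nat.min_eq_left (by omega)
        rw [h1]
        have h2 : ∑ j ∈ Finset.range S.card, r j = ∑ j ∈ Finset.range S.card, p j :=
          Finset.sum_congr rfl fun j hj => by
            have : j < m := lt_of_lt_of_le (Finset.mem_range.mp hj) hk
            simp only [hr, if_pos this]
        rw [h2]
        calc ∑ i ∈ S, q i ≤ topSum q S.card := le_topSum hq0 hqs S
          _ ≤ topSum p S.card := hmaj S.card hk
          _ ≤ ∑ j ∈ Finset.range S.card, p j := topSum_le_range hp0 hmono S.card
      · have h1 : min S.card (m + 1) = m + 1 := Nat.min_eq_right (by omega)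
        rw [h1, hrs]
        calc ∑ i ∈ S, q i ≤ ∑' i, q i := Summable.sum_le_tsum S (fun i _ => hq0 i) hqs
          _ = 1 := hq1
    have hschur := schur_entropy q r hq0 hqs hq1 hHq hr0 hr1 (m + 1) hrs hkey
    rw [hrH] at hschur
    linarith [hHsplit]
  apply Real.sSup_le hbound
  -- RHS nonneg since 0 is in the set
  have h0 : (0:ℝ) ∈ {x : ℝ | ∃ q, IsDistrib q ∧ (Summable fun i => Real.negMulLog (q i)) ∧
      PMaj m p q ∧
      x = (∑' i, Real.negMulLog (p i)) - ∑' i, Real.negMulLog (q i)} :=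
    ⟨p, ⟨hp0, hps, hp1⟩, hH, fun k _ => le_rfl, by ring⟩
  exact hbound 0 h0
end

section
/- Let p be a probability distribution in non-increasing order with finite Shannon entropy, let m ∈ ℕ, ε ∈ [0,1], d_k = 1 − ∑_{i=1}^k p_i, and suppose ε < d_{m+1}. Let ℓ = min{k : d_k ≤ ε}. Then for every probability distribution q that is m-partially majorized by p and satisfies (1/2)∑_i |p_i − q_i| ≤ ε, one has H(p) − H(q) ≤ Δ + Ŝ(p^{[ℓ−1]}), where Δ = η(p_{m+1}) + η(d_{ℓ−1}) − η(p_{m+1}+ε) − η(d_{ℓ−1}−ε), η(x) = −x ln x, H is Shannon entropy, and Ŝ(p^{[ℓ−1]}) = ∑_{i≥ℓ} η(p_i) − η(d_{ℓ−1}). -/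
open scoped BigOperators
open MeasureTheory

lemma antitone_sum_le_range {f : ℕ → ℝ} (hf : Antitone f) :
    ∀ (n : ℕ) (t : Finset ℕ), t.card = n → ∑ i ∈ t, f i ≤ ∑ i ∈ Finset.range n, f i := by
  intro n
  induction n with
  | zero => intro t h; simp [Finset.card_eq_zero.mp h]
  | succ n ih =>
    intro t h
    have hne : t.Nonempty := Finset.card_pos.mp (h ▸ n.succ_pos)
    set M := t.max' hne with hM
    have hMmem : M ∈ t := t.max'_mem hne
    have hsub : t ⊆ Finset.range (M + 1) := by
      intro x hx
      exact Finset.mem_range.mpr (Nat.lt_succ_of_le (t.le_max' x hx))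
    have hcard : n + 1 ≤ M + 1 := by
      calc n + 1 = t.card := h.symm
        _ ≤ (Finset.range (M + 1)).card := Finset.card_le_card hsub
        _ = M + 1 := by simp
    have hMn : n ≤ M := Nat.succ_le_succ_iff.mp hcard
    have hrec := ih (t.erase M) (by rw [Finset.card_erase_of_mem hMmem, h]; rfl)
    have hsplit : ∑ i ∈ t, f i = ∑ i ∈ t.erase M, f i + f M := by
      rw [← Finset.add_sum_erase t f hMmem]; ring
    rw [hsplit, Finset.sum_range_succ]
    exact add_le_add hrec (hf hMn)

lemma topSum_eq {p : ℕ → ℝ} (hmono : Antitone p) (k : ℕ) :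
    topSum p k = ∑ i ∈ Finset.range k, p i := by
  apply IsGreatest.csSup_eq
  constructor
  · exact ⟨Finset.range k, by simp⟩
  · rintro s ⟨t, ht, rfl⟩
    exact antitone_sum_le_range hmono k t ht

lemma sum_le_topSum {q : ℕ → ℝ} (hq0 : ∀ i, 0 ≤ q i) (hqs : Summable q) (t : Finset ℕ) :
    ∑ i ∈ t, q i ≤ topSum q t.card := by
  apply le_csSup
  · refine ⟨∑' i, q i, ?_⟩
    rintro s ⟨u, hu, rfl⟩
    exact Summable.sum_le_tsum u (fun i _ => hq0 i) hqs
  · exact ⟨t, rfl, rfl⟩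

lemma lint_min (x : ℝ) (hx0 : 0 ≤ x) (hx1 : x ≤ 1) :
    ∫⁻ s in Set.Ioc (0:ℝ) 1, ENNReal.ofReal (min x s / s) =
      ENNReal.ofReal (x + Real.negMulLog x) := by
  rcases eq_or_lt_of_le hx0 with h0 | h0
  · have : ∀ s ∈ Set.Ioc (0:ℝ) 1, ENNReal.ofReal (min x s / s) = 0 := by
      intro s hs
      rw [← h0]
      simp [min_eq_left hs.1.le]
    rw [setLIntegral_congr_fun measurableSet_Ioc this]
    simp [← h0, Real.negMulLog]
  · have hsplit : Set.Ioc (0:ℝ) 1 = Set.Ioc 0 x ∪ Set.Ioc x 1 :=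
      (Set.Ioc_union_Ioc_eq_Ioc hx0 hx1).symm
    have hdisj : Disjoint (Set.Ioc (0:ℝ) x) (Set.Ioc x 1) := Set.Ioc_disjoint_Ioc_of_le le_rfl
    rw [hsplit, lintegral_union measurableSet_Ioc hdisj]
    have h1 : ∫⁻ s in Set.Ioc (0:ℝ) x, ENNReal.ofReal (min x s / s) = ENNReal.ofReal x := by
      have : ∀ s ∈ Set.Ioc (0:ℝ) x, ENNReal.ofReal (min x s / s) = 1 := by
        intro s hs
        rw [min_eq_right hs.2, div_self (ne_of_gt hs.1)]
        simp
      rw [setLIntegral_congr_fun measurableSet_Ioc this]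
      simp [Real.volume_Ioc, hx0]
    have h2 : ∫⁻ s in Set.Ioc x 1, ENNReal.ofReal (min x s / s)
        = ENNReal.ofReal (Real.negMulLog x) := by
      have hcong : ∀ s ∈ Set.Ioc x 1, ENNReal.ofReal (min x s / s) = ENNReal.ofReal (x * s⁻¹) := by
        intro s hs
        rw [min_eq_left hs.1.le, div_eq_mul_inv]
      rw [setLIntegral_congr_fun measurableSet_Ioc hcong]
      have hint : IntegrableOn (fun s : ℝ => x * s⁻¹) (Set.Ioc x 1) := by
        have hicc : IntegrableOn (fun s : ℝ => x * s⁻¹) (Set.Icc x 1) := by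
          apply ContinuousOn.integrableOn_Icc
          apply continuousOn_const.mul
          apply ContinuousOn.inv₀ continuousOn_id
          intro s hs
          exact ne_of_gt (lt_of_lt_of_le h0 hs.1)
        exact hicc.mono_set Set.Ioc_subset_Icc_self
      rw [← ofReal_integral_eq_lintegral_ofReal hint]
      · congr 1
        have : ∫ s in Set.Ioc x 1, x * s⁻¹ = ∫ s in x..1, x * s⁻¹ := by
          rw [intervalIntegral.integral_of_le hx1]
        rw [this, intervalIntegral.integral_const_mul, integral_inv (by
          intro h
          rcases Set.mem_uIcc.mp h with ⟨h1, _⟩ | ⟨_, h2⟩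
          · exact absurd h1 (not_le.mpr h0)
          · linarith)]
        rw [Real.negMulLog, one_div, Real.log_inv]
        ring
      · filter_upwards [self_mem_ae_restrict measurableSet_Ioc] with s hs
        exact le_of_lt (mul_pos h0 (inv_pos.mpr (h0.trans hs.1)))
    rw [h1, h2, ← ENNReal.ofReal_add hx0 (Real.negMulLog_nonneg hx0 hx1)]

lemma lint_entropy (w : ℕ → ℝ) (h0 : ∀ i, 0 ≤ w i) (hs : Summable w) (h1 : ∑' i, w i = 1)
    (hH : Summable fun i => Real.negMulLog (w i)) :
    ∫⁻ s in Set.Ioc (0:ℝ) 1, ∑' j, ENNReal.ofReal (min (w j) s / s) =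
      ENNReal.ofReal (1 + ∑' j, Real.negMulLog (w j)) := by
  have hle1 : ∀ j, w j ≤ 1 := fun j => h1 ▸ Summable.le_tsum hs j (fun i _ => h0 i)
  rw [lintegral_tsum (f := fun j s => ENNReal.ofReal (min (w j) s / s))
    (fun j => Measurable.aemeasurable (by fun_prop))]
  have hval : ∀ j, (∫⁻ s in Set.Ioc (0:ℝ) 1, ENNReal.ofReal (min (w j) s / s))
      = ENNReal.ofReal (w j + Real.negMulLog (w j)) := fun j => lint_min _ (h0 j) (hle1 j)
  simp_rw [hval]
  rw [← ENNReal.ofReal_tsum_of_nonneg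
    (fun j => add_nonneg (h0 j) (Real.negMulLog_nonneg (h0 j) (hle1 j))) (hs.add hH)]
  congr 1
  rw [Summable.tsum_add hs hH, h1]

lemma tsum_posPart_eq {p q : ℕ → ℝ} (hp : Summable p) (hq : Summable q)
    (hpq : ∑' i, p i = ∑' i, q i) :
    ∑' i, max (q i - p i) 0 = (1/2) * ∑' i, |p i - q i| := by
  have habs : Summable fun i => |p i - q i| := (hp.sub hq).abs
  have hsub : Summable fun i => q i - p i := hq.sub hp
  have hpt : ∀ i, max (q i - p i) 0 = (|p i - q i| + (q i - p i)) / 2 := by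
    intro i
    rw [abs_sub_comm]
    rcases le_total (q i - p i) 0 with h | h
    · rw [max_eq_right h, abs_of_nonpos h]; ring
    · rw [max_eq_left h, abs_of_nonneg h]; ring
  calc ∑' i, max (q i - p i) 0 = ∑' i, (|p i - q i| + (q i - p i)) / 2 := tsum_congr hpt
    _ = (∑' i, (|p i - q i| + (q i - p i))) / 2 := tsum_div_const
    _ = (∑' i, |p i - q i| + (∑' i, q i - ∑' i, p i)) / 2 := by
        rw [Summable.tsum_add habs hsub, Summable.tsum_sub hq hp]
    _ = (1/2) * ∑' i, |p i - q i| := by rw [← hpq]; ring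

lemma min_eq_sub_posPart (x s : ℝ) : min x s = x - max (x - s) 0 := by
  rcases le_total x s with h | h
  · rw [min_eq_left h, max_eq_right (by linarith)]; ring
  · rw [min_eq_right h, max_eq_left (by linarith)]; ring

theorem entropy_pmaj_tv_bound (p : ℕ → ℝ) (hmono : Antitone p) (hp : IsDistrib p)
    (hH : Summable fun i => Real.negMulLog (p i))
    (m ℓ : ℕ) (ε : ℝ) (hε0 : 0 ≤ ε) (hε1 : ε ≤ 1)
    (hεd : ε < 1 - ∑ i ∈ Finset.range (m + 1), p i)
    (hℓ1 : 1 - ∑ i ∈ Finset.range ℓ, p i ≤ ε)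
    (hℓ2 : ∀ k < ℓ, ε < 1 - ∑ i ∈ Finset.range k, p i)
    (hℓm : m + 1 < ℓ)
    (q : ℕ → ℝ) (hq : IsDistrib q)
    (hqs : Summable fun i => Real.negMulLog (q i))
    (hqmaj : PMaj m p q) (hqtv : (1 / 2) * ∑' i, |p i - q i| ≤ ε) :
    (∑' i, Real.negMulLog (p i)) - (∑' i, Real.negMulLog (q i)) ≤
      (Real.negMulLog (p m)
        + Real.negMulLog (1 - ∑ i ∈ Finset.range (ℓ - 1), p i)
        - Real.negMulLog (p m + ε)
        - Real.negMulLog ((1 - ∑ i ∈ Finset.range (ℓ - 1), p i) - ε))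
      + ((∑' i, Real.negMulLog (p (i + (ℓ - 1))))
        - Real.negMulLog (1 - ∑ i ∈ Finset.range (ℓ - 1), p i)) := by
  obtain ⟨hp0, hps, hp1⟩ := hp
  obtain ⟨hq0, hqsum, hq1⟩ := hq
  have hmℓ : m < ℓ - 1 := by omega
  set d : ℝ := 1 - ∑ i ∈ Finset.range (ℓ - 1), p i with hd
  have hεd' : ε < d := hℓ2 (ℓ - 1) (by omega)
  set r : ℕ → ℝ := fun i =>
    if i < ℓ - 1 then (if i = m then p i + ε else p i)
    else if i = ℓ - 1 then d - ε else 0 with hrdef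
  have hr0 : ∀ i, 0 ≤ r i := by
    intro i
    simp only [hrdef]
    split_ifs with h1 h2 h3
    · exact add_nonneg (hp0 i) hε0
    · exact hp0 i
    · linarith
    · exact le_refl 0
  have hrvanish : ∀ i ∉ Finset.range ℓ, r i = 0 := by
    intro i hi
    simp only [Finset.mem_range, not_lt] at hi
    simp only [hrdef]
    rw [if_neg (by omega), if_neg (by omega)]
  have hrs : Summable r := summable_of_ne_finset_zero hrvanish
  have hrsum_lt : ∀ k, k ≤ ℓ - 1 → ∑ i ∈ Finset.range k, r i
      = ∑ i ∈ Finset.range k, p i + (if m < k then ε else 0) := by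
    intro k hk
    have hc : ∀ i ∈ Finset.range k, r i = p i + (if i = m then ε else 0) := by
      intro i hi
      have hik : i < k := Finset.mem_range.mp hi
      simp only [hrdef]
      rw [if_pos (by omega)]
      split_ifs <;> ring
    rw [Finset.sum_congr rfl hc, Finset.sum_add_distrib,
      Finset.sum_ite_eq' (Finset.range k) m (fun _ => ε)]
    simp [Finset.mem_range]
  have hrℓ1 : r (ℓ - 1) = d - ε := by
    simp [hrdef]
  have hrsumℓ : ∑ i ∈ Finset.range ℓ, r i = 1 := by
    have hℓeq : ℓ = (ℓ - 1) + 1 := by omega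
    rw [hℓeq, Finset.sum_range_succ, hrsum_lt (ℓ - 1) le_rfl, if_pos hmℓ, hrℓ1, hd]
    ring
  have hr1 : ∑' i, r i = 1 := by rw [tsum_eq_sum hrvanish]; exact hrsumℓ
  have hrHvanish : ∀ i ∉ Finset.range ℓ, Real.negMulLog (r i) = 0 := by
    intro i hi
    rw [hrvanish i hi]
    simp [Real.negMulLog]
  have hrH : Summable fun i => Real.negMulLog (r i) := summable_of_ne_finset_zero hrHvanish
  -- value of H(r)
  have hHr : ∑' i, Real.negMulLog (r i)
      = ∑ i ∈ Finset.range (ℓ - 1), Real.negMulLog (p i)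
        + (Real.negMulLog (p m + ε) - Real.negMulLog (p m)) + Real.negMulLog (d - ε) := by
    rw [tsum_eq_sum hrHvanish]
    have hℓeq : ℓ = (ℓ - 1) + 1 := by omega
    rw [hℓeq, Finset.sum_range_succ, hrℓ1]
    simp only [Nat.add_sub_cancel]
    congr 1
    have hc : ∀ i ∈ Finset.range (ℓ - 1), Real.negMulLog (r i)
        = Real.negMulLog (p i)
          + (if i = m then Real.negMulLog (p i + ε) - Real.negMulLog (p i) else 0) := by
      intro i hi
      have hik : i < ℓ - 1 := Finset.mem_range.mp hi
      simp only [hrdef]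
      rw [if_pos hik]
      split_ifs with h
      · ring
      · ring
    rw [Finset.sum_congr rfl hc, Finset.sum_add_distrib,
      Finset.sum_ite_eq' (Finset.range (ℓ - 1)) m
        (fun i => Real.negMulLog (p i + ε) - Real.negMulLog (p i)),
      if_pos (Finset.mem_range.mpr hmℓ)]
  -- TV bound on positive part
  have hposqp : Summable fun j => max (q j - p j) 0 := by
    apply Summable.of_nonneg_of_le (fun j => le_max_right _ _) _ ((hps.sub hqsum).abs)
    intro j
    rw [abs_sub_comm]
    exact max_le (le_abs_self _) (abs_nonneg _)
  have hεhalf : ∑' i, max (q i - p i) 0 ≤ ε := by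
    rw [tsum_posPart_eq hps hqsum (by rw [hp1, hq1])]
    exact hqtv
  have hqle1 : ∀ j, q j ≤ 1 := fun j => hq1 ▸ Summable.le_tsum hqsum j (fun i _ => hq0 i)
  -- key pointwise inequality
  have hkey : ∀ s : ℝ, s ∈ Set.Ioc (0:ℝ) 1 → ∑' j, min (r j) s ≤ ∑' j, min (q j) s := by
    intro s hs
    have hs0 : 0 < s := hs.1
    have hposq : Summable fun j => max (q j - s) 0 :=
      Summable.of_nonneg_of_le (fun j => le_max_right _ _)
        (fun j => max_le (by linarith [hq0 j, sub_le_self (q j) hs0.le]) (hq0 j)) hqsum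
    have eq_q : ∑' j, min (q j) s = 1 - ∑' j, max (q j - s) 0 := by
      rw [tsum_congr (fun j => min_eq_sub_posPart (q j) s), Summable.tsum_sub hqsum hposq, hq1]
    have eq_r : ∑' j, min (r j) s
        = 1 - ∑ i ∈ Finset.range ℓ, max (r i - s) 0 := by
      rw [tsum_eq_sum (s := Finset.range ℓ) (fun i hi => by
        rw [hrvanish i hi, min_eq_left hs0.le])]
      rw [Finset.sum_congr rfl (fun i _ => min_eq_sub_posPart (r i) s),
        Finset.sum_sub_distrib, hrsumℓ]
    set G := ∑ i ∈ Finset.range ℓ, max (r i - s) 0 with hGdef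
    have hG : ∀ k, k ≤ ℓ → ∑ i ∈ Finset.range k, r i - k * s ≤ G := by
      intro k hk
      calc ∑ i ∈ Finset.range k, r i - (k : ℝ) * s = ∑ i ∈ Finset.range k, (r i - s) := by
            rw [Finset.sum_sub_distrib, Finset.sum_const, Finset.card_range, nsmul_eq_mul]
        _ ≤ ∑ i ∈ Finset.range k, max (r i - s) 0 :=
            Finset.sum_le_sum fun i _ => le_max_left _ _
        _ ≤ G := Finset.sum_le_sum_of_subset_of_nonneg (by
              exact Finset.range_subset_range.mpr hk) (fun i _ _ => le_max_right _ _)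
    have hqG : ∑' j, max (q j - s) 0 ≤ G := by
      apply Summable.tsum_le_of_sum_le hposq
      intro t
      set u := t.filter (fun j => s < q j) with hu
      have hub : ∑ j ∈ t, max (q j - s) 0 = ∑ j ∈ u, (q j - s) := by
        rw [hu, Finset.sum_filter]
        apply Finset.sum_congr rfl
        intro j _
        rcases lt_or_ge s (q j) with h | h
        · rw [if_pos h, max_eq_left (by linarith)]
        · rw [if_neg (not_lt.mpr h), max_eq_right (by linarith)]
      rw [hub, Finset.sum_sub_distrib, Finset.sum_const, nsmul_eq_mul]
      set k := u.card with hk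
      have hqu : ∑ j ∈ u, q j ≤ topSum q k := sum_le_topSum hq0 hqsum u
      rcases le_or_gt k m with hkm | hkm
      · have h1 : topSum q k ≤ topSum p k := hqmaj k hkm
        have h2 : topSum p k = ∑ i ∈ Finset.range k, p i := topSum_eq hmono k
        have h3 : ∑ i ∈ Finset.range k, p i ≤ ∑ i ∈ Finset.range k, r i := by
          apply Finset.sum_le_sum
          intro i hi
          have hik : i < k := Finset.mem_range.mp hi
          simp only [hrdef]
          rw [if_pos (by omega)]
          split_ifs with h
          · linarith
          · exact le_refl _
        have h4 := hG k (by omega)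
        linarith
      · rcases le_or_gt k (ℓ - 1) with hkℓ | hkℓ
        · have e1 : ∑ j ∈ u, q j = ∑ j ∈ u, p j + ∑ j ∈ u, (q j - p j) := by
            rw [← Finset.sum_add_distrib]
            exact Finset.sum_congr rfl fun j _ => by ring
          have e2 : ∑ j ∈ u, p j ≤ ∑ i ∈ Finset.range k, p i :=
            antitone_sum_le_range hmono k u hk.symm
          have e3 : ∑ j ∈ u, (q j - p j) ≤ ε := by
            calc ∑ j ∈ u, (q j - p j) ≤ ∑ j ∈ u, max (q j - p j) 0 :=
                  Finset.sum_le_sum fun _ _ => le_max_left _ _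
              _ ≤ ∑' j, max (q j - p j) 0 :=
                  Summable.sum_le_tsum u (fun _ _ => le_max_right _ _) hposqp
              _ ≤ ε := hεhalf
          have h2 : ∑ i ∈ Finset.range k, p i + ε = ∑ i ∈ Finset.range k, r i := by
            rw [hrsum_lt k hkℓ, if_pos hkm]
          have h4 := hG k (by omega)
          linarith
        · have h1 : ∑ j ∈ u, q j ≤ 1 := by
            rw [← hq1]
            exact Summable.sum_le_tsum u (fun i _ => hq0 i) hqsum
          have h2 := hG ℓ le_rfl
          rw [hrsumℓ] at h2
          have h3 : (ℓ : ℝ) * s ≤ (k : ℝ) * s := by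
            apply mul_le_mul_of_nonneg_right _ hs0.le
            exact_mod_cast (by omega : ℓ ≤ k)
          linarith
    rw [eq_q, eq_r]
    linarith
  -- compare entropies via lintegral
  have hLq := lint_entropy q hq0 hqsum hq1 hqs
  have hLr := lint_entropy r hr0 hrs hr1 hrH
  have hmono_int : ENNReal.ofReal (1 + ∑' i, Real.negMulLog (r i))
      ≤ ENNReal.ofReal (1 + ∑' i, Real.negMulLog (q i)) := by
    rw [← hLq, ← hLr]
    apply lintegral_mono_ae
    filter_upwards [ae_restrict_mem measurableSet_Ioc] with s hs
    have hs0 : 0 < s := hs.1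
    have hsum_min : ∀ (w : ℕ → ℝ), (∀ i, 0 ≤ w i) → Summable w →
        ∑' j, ENNReal.ofReal (min (w j) s / s) = ENNReal.ofReal ((∑' j, min (w j) s) / s) := by
      intro w h0 hsw
      rw [← ENNReal.ofReal_tsum_of_nonneg (fun j => div_nonneg (le_min (h0 j) hs0.le) hs0.le)
        ((Summable.of_nonneg_of_le (fun j => le_min (h0 j) hs0.le)
          (fun j => min_le_left _ _) hsw).div_const s)]
      rw [tsum_div_const]
    rw [hsum_min q hq0 hqsum, hsum_min r hr0 hrs]
    apply ENNReal.ofReal_le_ofReal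
    gcongr ?_ / _
    exact hkey s hs
  have hHq0 : 0 ≤ ∑' i, Real.negMulLog (q i) :=
    tsum_nonneg fun i => Real.negMulLog_nonneg (hq0 i) (hqle1 i)
  have hrq : ∑' i, Real.negMulLog (r i) ≤ ∑' i, Real.negMulLog (q i) := by
    have := (ENNReal.ofReal_le_ofReal_iff (by linarith)).mp hmono_int
    linarith
  have hsplitp : ∑ i ∈ Finset.range (ℓ - 1), Real.negMulLog (p i)
      + ∑' i, Real.negMulLog (p (i + (ℓ - 1))) = ∑' i, Real.negMulLog (p i) :=
    Summable.sum_add_tsum_nat_add (ℓ - 1) hH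
  rw [hHr] at hrq
  linarith
end
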